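/- arXiv:1701.05637 — 4 statements merged into one kernel-verified Lean document; each statement's English description precedes it below -/
import Mathlib

section
/- For any guessing function $G$ on a finite set $\mathcal{X}$ with side information $Y$, and any $\rho > 0$, the $\rho$-th moment of the guesswork satisfies $E[G(X|Y)^\rho] \le \sum_y \left( \sum_x P_{X,Y}(x,y)^{1/(1+\rho)} \right)^{1+\rho}$ when $G(\cdot|Y=y)$ orders the values of $X$ in decreasing order of $P_{X|Y}(x|y)$. -/
open Real

/-- Arikan's upper bound: for the optimal (probability-decreasing) guessing order
with side information, the ρth guesswork moment is at most
`∑_y (∑_x P(x,y)^{1/(1+ρ)})^{1+ρ}`. -/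
theorem arikan_upper_bound
    {X Y : Type*} [Fintype X] [Fintype Y] (P : X → Y → ℝ) (ρ : ℝ) (hρ : 0 < ρ)
    (hP0 : ∀ x y, 0 ≤ P x y) (hP1 : ∑ y, ∑ x, P x y = 1)
    (G : Y → (X ≃ Fin (Fintype.card X)))
    (hdec : ∀ y, ∀ x x' : X, G y x ≤ G y x' → P x' y ≤ P x y) :
    ∑ y, ∑ x, ((G y x : ℕ) + 1 : ℝ) ^ ρ * P x y ≤
      ∑ y, (∑ x, (P x y) ^ (1 / (1 + ρ))) ^ (1 + ρ) := by
  have h1ρ : (0:ℝ) < 1 + ρ := by linarith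
  set β : ℝ := 1 / (1 + ρ) with hβdef
  have hβ : 0 < β := by positivity
  apply Finset.sum_le_sum
  intro y _
  set S : ℝ := ∑ x, (P x y) ^ β with hS
  have hS0 : 0 ≤ S :=
    Finset.sum_nonneg fun x _ => Real.rpow_nonneg (hP0 x y) β
  have key : ∀ x : X, ((G y x : ℕ) + 1 : ℝ) ^ ρ * P x y ≤ S ^ ρ * (P x y) ^ β := by
    intro x
    rcases eq_or_lt_of_le (hP0 x y) with hPx | hPx
    · rw [← hPx, mul_zero, Real.zero_rpow hβ.ne', mul_zero]
    · -- rank bound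
      have hcard : (Finset.univ.filter fun x' => G y x' ≤ G y x).card
          = (G y x : ℕ) + 1 := by
        have : (Finset.univ.filter fun x' => G y x' ≤ G y x)
            = (Finset.Iic (G y x)).map (G y).symm.toEmbedding := by
          ext x'
          simp [Finset.mem_map, Equiv.symm_apply_eq, eq_comm]
        rw [this, Finset.card_map, Fin.card_Iic]
      have hrank : ((G y x : ℕ) + 1 : ℝ) ≤ S / (P x y) ^ β := by
        have hPβ : (0:ℝ) < (P x y) ^ β := Real.rpow_pos_of_pos hPx β
        have hsum : ((G y x : ℕ) + 1 : ℝ)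
            = ∑ x', (if G y x' ≤ G y x then (1:ℝ) else 0) := by
          rw [Finset.sum_boole, hcard]
          push_cast; ring
        rw [hsum, hS, Finset.sum_div]
        apply Finset.sum_le_sum
        intro x' _
        by_cases h : G y x' ≤ G y x
        · simp only [h, if_true]
          rw [le_div_iff₀ hPβ, one_mul]
          exact Real.rpow_le_rpow (hP0 x y) (hdec y x' x h) hβ.le
        · simp only [h, if_false]
          exact div_nonneg (Real.rpow_nonneg (hP0 x' y) β) hPβ.le
      have hB : ((G y x : ℕ) + 1 : ℝ) ^ ρ ≤ (S / (P x y) ^ β) ^ ρ :=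
        Real.rpow_le_rpow (by positivity) hrank hρ.le
      have hC : ((G y x : ℕ) + 1 : ℝ) ^ ρ * P x y ≤ (S / (P x y) ^ β) ^ ρ * P x y :=
        mul_le_mul_of_nonneg_right hB (hP0 x y)
      refine hC.trans_eq ?_
      have hPβ : (0:ℝ) < (P x y) ^ β := Real.rpow_pos_of_pos hPx β
      rw [Real.div_rpow hS0 hPβ.le, ← Real.rpow_mul (hP0 x y),
        div_mul_eq_mul_div, mul_div_assoc]
      congr 1
      have h1 : β = 1 - β * ρ := by
        rw [hβdef]; field_simp; ring
      conv_rhs => rw [h1]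
      rw [Real.rpow_sub hPx, Real.rpow_one]
  calc ∑ x, ((G y x : ℕ) + 1 : ℝ) ^ ρ * P x y
      ≤ ∑ x, S ^ ρ * (P x y) ^ β := Finset.sum_le_sum fun x _ => key x
    _ = S ^ ρ * S := by rw [← Finset.mul_sum]
    _ ≤ S ^ (1 + ρ) := by
        rcases eq_or_lt_of_le hS0 with h0 | hSpos
        · rw [← h0, Real.zero_rpow hρ.ne', Real.zero_rpow h1ρ.ne', zero_mul]
        · rw [add_comm, Real.rpow_add_one hSpos.ne' ρ]
end

section
/- For any guessing function $G$ on a finite set $\mathcal{X}$ of size $M$ with side information $Y$ and any $\rho > 0$, the $\rho$-th moment of guesswork satisfies $E[G(X|Y)^\rho] \ge (1+\ln M)^{-\rho} \sum_y \left( \sum_x P_{X,Y}(x,y)^{1/(1+\rho)} \right)^{1+\rho}$. -/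
open Real

/-- Arikan's lower bound: for any guessing function with side information,
the ρth guesswork moment is at least
`(1+ln M)^{-ρ} ∑_y (∑_x P(x,y)^{1/(1+ρ)})^{1+ρ}`. -/
theorem arikan_lower_bound
    {X Y : Type*} [Fintype X] [Fintype Y] (P : X → Y → ℝ) (ρ : ℝ) (hρ : 0 < ρ)
    (hP0 : ∀ x y, 0 ≤ P x y) (hP1 : ∑ y, ∑ x, P x y = 1)
    (G : Y → (X ≃ Fin (Fintype.card X))) :
    (1 + Real.log (Fintype.card X)) ^ (-ρ) *
        ∑ y, (∑ x, (P x y) ^ (1 / (1 + ρ))) ^ (1 + ρ) ≤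
      ∑ y, ∑ x, ((G y x : ℕ) + 1 : ℝ) ^ ρ * P x y := by
  have h1ρ : (0:ℝ) < 1 + ρ := by linarith
  rcases Nat.eq_zero_or_pos (Fintype.card X) with hM0 | hMpos
  · have : IsEmpty X := Fintype.card_eq_zero_iff.mp hM0
    simp [hM0, Real.zero_rpow h1ρ.ne']
  set C : ℝ := 1 + Real.log (Fintype.card X) with hC
  have hC1 : (1:ℝ) ≤ C := by
    have : (0:ℝ) ≤ Real.log (Fintype.card X) := Real.log_nonneg (by exact_mod_cast hMpos)
    linarith
  have hCpos : 0 < C := lt_of_lt_of_le one_pos hC1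
  have key : ∀ y, (∑ x, (P x y) ^ (1 / (1 + ρ))) ^ (1 + ρ) ≤
      C ^ ρ * ∑ x, ((G y x : ℕ) + 1 : ℝ) ^ ρ * P x y := by
    intro y
    have hn : ∀ x : X, (0:ℝ) < ((G y x : ℕ) + 1 : ℝ) := fun x => by
      have : (0:ℝ) ≤ ((G y x : ℕ) : ℝ) := Nat.cast_nonneg _
      linarith
    set T : ℝ := ∑ x, ((G y x : ℕ) + 1 : ℝ) ^ ρ * P x y with hT
    have hTnn : 0 ≤ T := Finset.sum_nonneg fun x _ =>
      mul_nonneg (Real.rpow_nonneg (hn x).le _) (hP0 x y)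
    set H : ℝ := ∑ x : X, (((G y x : ℕ) + 1 : ℝ))⁻¹ with hHdef
    have hH : H ≤ C := by
      have e1 : H = ∑ i : Fin (Fintype.card X), ((((i : ℕ) : ℝ)) + 1)⁻¹ :=
        Fintype.sum_equiv (G y) _ _ (fun x => rfl)
      have e3 : ∑ i : Fin (Fintype.card X), ((((i : ℕ) : ℝ)) + 1)⁻¹
          = ∑ i ∈ Finset.range (Fintype.card X), (((i : ℝ)) + 1)⁻¹ :=
        Fin.sum_univ_eq_sum_range (fun i => (((i : ℝ)) + 1)⁻¹) (Fintype.card X)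
      have h := harmonic_le_one_add_log (Fintype.card X)
      have e2 : (harmonic (Fintype.card X) : ℝ) = ∑ i ∈ Finset.range (Fintype.card X), (((i : ℝ)) + 1)⁻¹ := by
        unfold harmonic; push_cast; rfl
      rw [e1, e3, ← e2]
      exact h
    have hHnn : (0:ℝ) ≤ H := Finset.sum_nonneg fun x _ => (inv_pos.mpr (hn x)).le
    have hconj : Real.HolderConjugate ((1 + ρ)/ρ) (1 + ρ) := by
      rw [Real.holderConjugate_iff]; constructor
      · rw [lt_div_iff₀ hρ]; linarith
      · field_simp; ring
    have holder := Real.inner_le_Lp_mul_Lq_of_nonneg Finset.univ hconj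
      (f := fun x => ((G y x : ℕ) + 1 : ℝ) ^ (-(ρ/(1+ρ))))
      (g := fun x => ((G y x : ℕ) + 1 : ℝ) ^ (ρ/(1+ρ)) * (P x y) ^ (1/(1+ρ)))
      (fun x _ => Real.rpow_nonneg (hn x).le _)
      (fun x _ => mul_nonneg (Real.rpow_nonneg (hn x).le _) (Real.rpow_nonneg (hP0 x y) _))
    have efg : (∑ x : X, ((G y x : ℕ) + 1 : ℝ) ^ (-(ρ/(1+ρ))) *
        (((G y x : ℕ) + 1 : ℝ) ^ (ρ/(1+ρ)) * (P x y) ^ (1/(1+ρ))))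
        = ∑ x : X, (P x y) ^ (1/(1+ρ)) := by
      refine Finset.sum_congr rfl fun x _ => ?_
      rw [← mul_assoc, ← Real.rpow_add (hn x), neg_add_cancel, Real.rpow_zero, one_mul]
    have ef : (∑ x : X, (((G y x : ℕ) + 1 : ℝ) ^ (-(ρ/(1+ρ)))) ^ ((1+ρ)/ρ)) = H := by
      refine Finset.sum_congr rfl fun x _ => ?_
      rw [← Real.rpow_mul (hn x).le]
      have he : -(ρ/(1+ρ)) * ((1+ρ)/ρ) = -1 := by field_simp
      rw [he, Real.rpow_neg_one]
    have eg : (∑ x : X, (((G y x : ℕ) + 1 : ℝ) ^ (ρ/(1+ρ)) * (P x y) ^ (1/(1+ρ))) ^ (1+ρ))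
        = T := by
      refine Finset.sum_congr rfl fun x _ => ?_
      rw [Real.mul_rpow (Real.rpow_nonneg (hn x).le _) (Real.rpow_nonneg (hP0 x y) _),
        ← Real.rpow_mul (hn x).le, ← Real.rpow_mul (hP0 x y),
        div_mul_cancel₀ _ h1ρ.ne', one_div_mul_cancel h1ρ.ne', Real.rpow_one]
    rw [efg, ef, eg] at holder
    have hexp : 1 / ((1+ρ)/ρ) = ρ/(1+ρ) := by
      rw [one_div_div]
    rw [hexp] at holder
    have hSnn : (0:ℝ) ≤ ∑ x, (P x y) ^ (1 / (1 + ρ)) :=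
      Finset.sum_nonneg fun x _ => Real.rpow_nonneg (hP0 x y) _
    have step2 : ∑ x, (P x y) ^ (1 / (1 + ρ)) ≤ C ^ (ρ/(1+ρ)) * T ^ (1/(1+ρ)) := by
      refine holder.trans (mul_le_mul_of_nonneg_right ?_ (Real.rpow_nonneg hTnn _))
      exact Real.rpow_le_rpow hHnn hH (by positivity)
    calc (∑ x, (P x y) ^ (1 / (1 + ρ))) ^ (1 + ρ)
        ≤ (C ^ (ρ/(1+ρ)) * T ^ (1/(1+ρ))) ^ (1+ρ) :=
          Real.rpow_le_rpow hSnn step2 h1ρ.le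
      _ = C ^ ρ * T := by
          rw [Real.mul_rpow (Real.rpow_nonneg hCpos.le _) (Real.rpow_nonneg hTnn _),
            ← Real.rpow_mul hCpos.le, ← Real.rpow_mul hTnn,
            div_mul_cancel₀ _ h1ρ.ne', one_div_mul_cancel h1ρ.ne', Real.rpow_one]
  have hsum : ∑ y, (∑ x, (P x y) ^ (1 / (1 + ρ))) ^ (1 + ρ) ≤
      C ^ ρ * ∑ y, ∑ x, ((G y x : ℕ) + 1 : ℝ) ^ ρ * P x y := by
    rw [Finset.mul_sum]
    exact Finset.sum_le_sum fun y _ => key y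
  rw [Real.rpow_neg hCpos.le, inv_mul_le_iff₀ (Real.rpow_pos_of_pos hCpos ρ)]
  exact hsum
end

section
/- For $0 < p \le 1/2$ and $\rho > 0$, the function $q \mapsto \rho H(q) - D(q\|p)$ on $[0,1]$ is concave and attains its maximum at $s^* = \frac{p^{1/(1+\rho)}}{p^{1/(1+\rho)} + (1-p)^{1/(1+\rho)}}$, where the maximum value equals $\rho H_{1/(1+\rho)}(p) = (1+\rho)\log_2\left(p^{1/(1+\rho)} + (1-p)^{1/(1+\rho)}\right)$. -/
open Real

/-- Binary Shannon entropy (in bits). -/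
noncomputable def Hbin (q : ℝ) : ℝ :=
  -(q * Real.logb 2 q) - (1 - q) * Real.logb 2 (1 - q)

/-- Binary Kullback–Leibler divergence (in bits). -/
noncomputable def klBin (q p : ℝ) : ℝ :=
  q * Real.logb 2 (q / p) + (1 - q) * Real.logb 2 ((1 - q) / (1 - p))

lemma aux_log {t c : ℝ} (ht : 0 ≤ t) (hc : 0 < c) : t - c ≤ t * Real.log (t / c) := by
  rcases eq_or_lt_of_le ht with h | h
  · simp [← h]; linarith
  · have h1 : Real.log (c / t) ≤ c / t - 1 := Real.log_le_sub_one_of_pos (by positivity)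
    have h2 : Real.log (c / t) = -Real.log (t / c) := by
      rw [← Real.log_inv]; congr 1; field_simp
    rw [h2] at h1
    have h3 : t * (c / t - 1) = c - t := by field_simp
    nlinarith [mul_le_mul_of_nonneg_left h1 h.le, h3]

lemma klBin_nonneg {q s : ℝ} (hq0 : 0 ≤ q) (hq1 : q ≤ 1) (hs0 : 0 < s) (hs1 : s < 1) :
    0 ≤ klBin q s := by
  have h1 := aux_log hq0 hs0
  have h2 := aux_log (t := 1 - q) (c := 1 - s) (by linarith) (by linarith)
  have hl2 : (0:ℝ) < Real.log 2 := Real.log_pos (by norm_num)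
  have : 0 ≤ q * Real.log (q / s) + (1 - q) * Real.log ((1 - q) / (1 - s)) := by linarith
  have he : klBin q s = (q * Real.log (q / s) + (1 - q) * Real.log ((1 - q) / (1 - s))) / Real.log 2 := by
    simp [klBin, Real.logb]; ring
  rw [he]
  positivity

lemma klBin_self {s : ℝ} (hs0 : 0 < s) (hs1 : s < 1) : klBin s s = 0 := by
  have h1 : s / s = 1 := div_self hs0.ne'
  have h2 : (1 - s) / (1 - s) = 1 := div_self (by linarith)
  simp [klBin, h1, h2]

lemma klBin_eq {p q : ℝ} (hp0 : 0 < p) (hp1 : p < 1) (hq0 : 0 ≤ q) (hq1 : q ≤ 1) :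
    klBin q p = -Hbin q - q * Real.logb 2 p - (1 - q) * Real.logb 2 (1 - p) := by
  rcases eq_or_lt_of_le hq0 with h0 | h0
  · simp [klBin, Hbin, ← h0, Real.logb_div one_ne_zero (by linarith : (1:ℝ) - p ≠ 0)]
  rcases eq_or_lt_of_le hq1 with h1 | h1
  · simp [klBin, Hbin, h1, Real.logb_div one_ne_zero hp0.ne']
  rw [klBin, Hbin, Real.logb_div h0.ne' hp0.ne',
    Real.logb_div (by linarith : (1:ℝ) - q ≠ 0) (by linarith : (1:ℝ) - p ≠ 0)]
  ring

lemma concaveOn_congr {s : Set ℝ} {f g : ℝ → ℝ} (hg : ConcaveOn ℝ s g)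
    (h : Set.EqOn f g s) : ConcaveOn ℝ s f := by
  refine ⟨hg.1, fun x hx y hy a b ha hb hab => ?_⟩
  rw [h hx, h hy, h (hg.1 hx hy ha hb hab)]
  exact hg.2 hx hy ha hb hab

lemma hbin_concave : ConcaveOn ℝ (Set.Icc (0:ℝ) 1) Hbin := by
  have h1 : ConcaveOn ℝ (Set.Icc (0:ℝ) 1) Real.negMulLog :=
    Real.concaveOn_negMulLog.subset (fun x hx => hx.1) (convex_Icc 0 1)
  have h2 : ConcaveOn ℝ (Set.Icc (0:ℝ) 1) (fun q => Real.negMulLog (1 - q)) := by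
    refine ⟨convex_Icc 0 1, fun x hx y hy a b ha hb hab => ?_⟩
    have := Real.concaveOn_negMulLog.2 (Set.mem_Ici.mpr (by linarith [hx.2] : (0:ℝ) ≤ 1 - x))
      (Set.mem_Ici.mpr (by linarith [hy.2] : (0:ℝ) ≤ 1 - y)) ha hb hab
    have he : a * (1 - x) + b * (1 - y) = 1 - (a * x + b * y) := by linarith
    simp only [smul_eq_mul] at this ⊢
    rw [he] at this
    exact this
  have h3 := ((h1.add h2).smul (by positivity : (0:ℝ) ≤ (Real.log 2)⁻¹))
  refine concaveOn_congr h3 (fun q hq => ?_)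
  have hl2 : Real.log 2 ≠ 0 := ne_of_gt (Real.log_pos (by norm_num))
  simp [Hbin, Real.negMulLog, Real.logb, smul_eq_mul]
  field_simp
  ring

lemma affine_concave (c1 c2 : ℝ) :
    ConcaveOn ℝ (Set.Icc (0:ℝ) 1) (fun q => q * c1 + (1 - q) * c2) := by
  refine ⟨convex_Icc 0 1, fun x hx y hy a b ha hb hab => ?_⟩
  simp only [smul_eq_mul]
  exact le_of_eq (by linear_combination c2 * hab)

/-- `q ↦ ρH(q) - D(q‖p)` is concave on `[0,1]`, is maximized at
`s* = p^{1/(1+ρ)} / (p^{1/(1+ρ)} + (1-p)^{1/(1+ρ)})`, and its maximum value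
equals `ρ H_{1/(1+ρ)}(p) = (1+ρ) log₂(p^{1/(1+ρ)} + (1-p)^{1/(1+ρ)})`. -/
theorem concave_max_guesswork_exponent
    (p ρ : ℝ) (hp0 : 0 < p) (hp : p ≤ 1 / 2) (hρ : 0 < ρ) :
    ConcaveOn ℝ (Set.Icc (0 : ℝ) 1) (fun q => ρ * Hbin q - klBin q p) ∧
    IsMaxOn (fun q => ρ * Hbin q - klBin q p) (Set.Icc (0 : ℝ) 1)
      (p ^ (1 / (1 + ρ)) / (p ^ (1 / (1 + ρ)) + (1 - p) ^ (1 / (1 + ρ)))) ∧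
    (fun q => ρ * Hbin q - klBin q p)
        (p ^ (1 / (1 + ρ)) / (p ^ (1 / (1 + ρ)) + (1 - p) ^ (1 / (1 + ρ)))) =
      (1 + ρ) * Real.logb 2 (p ^ (1 / (1 + ρ)) + (1 - p) ^ (1 / (1 + ρ))) := by
  have hp1 : p < 1 := by linarith
  have hρ1 : (0:ℝ) < 1 + ρ := by linarith
  set r : ℝ := 1 / (1 + ρ) with hr
  set a : ℝ := p ^ r with ha
  set b : ℝ := (1 - p) ^ r with hb
  have ha0 : 0 < a := Real.rpow_pos_of_pos hp0 r
  have hb0 : 0 < b := Real.rpow_pos_of_pos (by linarith) r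
  have hS0 : 0 < a + b := by linarith
  set s : ℝ := a / (a + b) with hs
  have hs0 : 0 < s := div_pos ha0 hS0
  have hs1 : s < 1 := by
    rw [hs, div_lt_one hS0]; linarith
  have h1s : 1 - s = b / (a + b) := by
    rw [hs]; field_simp; ring
  have hl2 : Real.log 2 ≠ 0 := ne_of_gt (Real.log_pos (by norm_num))
  have hloga : Real.logb 2 a = r * Real.logb 2 p := by
    simp [ha, Real.logb, Real.log_rpow hp0]; ring
  have hlogb : Real.logb 2 b = r * Real.logb 2 (1 - p) := by
    simp [hb, Real.logb, Real.log_rpow (by linarith : (0:ℝ) < 1 - p)]; ring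
  have hlogs : Real.logb 2 s = r * Real.logb 2 p - Real.logb 2 (a + b) := by
    rw [hs, Real.logb_div ha0.ne' hS0.ne', hloga]
  have hlog1s : Real.logb 2 (1 - s) = r * Real.logb 2 (1 - p) - Real.logb 2 (a + b) := by
    rw [h1s, Real.logb_div hb0.ne' hS0.ne', hlogb]
  have hrρ : (1 + ρ) * r = 1 := by
    rw [hr]; field_simp
  -- the master identity on [0,1]
  have key : ∀ q ∈ Set.Icc (0:ℝ) 1,
      ρ * Hbin q - klBin q p = (1 + ρ) * (Real.logb 2 (a + b) - klBin q s) := by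
    intro q hq
    rw [klBin_eq hp0 hp1 hq.1 hq.2, klBin_eq hs0 hs1 hq.1 hq.2, hlogs, hlog1s]
    linear_combination (-(q * Real.logb 2 p + (1 - q) * Real.logb 2 (1 - p))) * hrρ
  refine ⟨?_, ?_, ?_⟩
  · -- concavity
    have hF : ConcaveOn ℝ (Set.Icc (0:ℝ) 1)
        (fun q => (1 + ρ) * Hbin q + (q * Real.logb 2 p + (1 - q) * Real.logb 2 (1 - p))) :=
      (hbin_concave.smul hρ1.le).add (affine_concave _ _)
    refine concaveOn_congr hF (fun q hq => ?_)
    rw [klBin_eq hp0 hp1 hq.1 hq.2]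
    ring
  · -- max
    intro q hq
    simp only [Set.mem_setOf_eq]
    rw [key q hq, key s ⟨hs0.le, hs1.le⟩, klBin_self hs0 hs1]
    have h0 := klBin_nonneg hq.1 hq.2 hs0 hs1
    nlinarith
  · -- value
    simp only
    rw [key s ⟨hs0.le, hs1.le⟩, klBin_self hs0 hs1]
    ring
end

section
/- For $p \in (0,1)$ and $\rho > 0$, the identity $\rho H(s^*) - D(s^*\|p) = \rho H_{1/(1+\rho)}(p)$ holds, where $s^* = \frac{p^{1/(1+\rho)}}{p^{1/(1+\rho)} + (1-p)^{1/(1+\rho)}}$. -/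
open Real

/-- `ρH(s*) - D(s*‖p) = ρ H_{1/(1+ρ)}(p)` at
`s* = p^{1/(1+ρ)} / (p^{1/(1+ρ)} + (1-p)^{1/(1+ρ)})`, where
`ρ H_{1/(1+ρ)}(p) = (1+ρ) log₂(p^{1/(1+ρ)} + (1-p)^{1/(1+ρ)})`. -/
theorem renyi_identity_at_sstar (p ρ : ℝ) (hp : p ∈ Set.Ioo (0 : ℝ) 1) (hρ : 0 < ρ) :
    ρ * Hbin (p ^ (1 / (1 + ρ)) / (p ^ (1 / (1 + ρ)) + (1 - p) ^ (1 / (1 + ρ)))) -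
        klBin (p ^ (1 / (1 + ρ)) / (p ^ (1 / (1 + ρ)) + (1 - p) ^ (1 / (1 + ρ)))) p =
      ρ * ((1 + ρ) / ρ * Real.logb 2 (p ^ (1 / (1 + ρ)) + (1 - p) ^ (1 / (1 + ρ)))) := by
  obtain ⟨hp0, hp1⟩ := hp
  have hρ1 : (0:ℝ) < 1 + ρ := by linarith
  set a := p ^ (1 / (1 + ρ)) with ha
  set b := (1 - p) ^ (1 / (1 + ρ)) with hb
  have ha0 : 0 < a := Real.rpow_pos_of_pos hp0 _
  have hb0 : 0 < b := Real.rpow_pos_of_pos (by linarith) _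
  have hS0 : 0 < a + b := by linarith
  have hs1 : 1 - a / (a + b) = b / (a + b) := by field_simp; ring
  have hla : Real.log p = (1 + ρ) * Real.log a := by
    rw [ha, Real.log_rpow hp0]; field_simp
  have hlb : Real.log (1 - p) = (1 + ρ) * Real.log b := by
    rw [hb, Real.log_rpow (by linarith)]; field_simp
  have hl2 : Real.log 2 ≠ 0 := by positivity
  have h1 : Real.log (a / (a + b)) = Real.log a - Real.log (a + b) :=
    Real.log_div (by positivity) (by positivity)
  have h2 : Real.log (b / (a + b)) = Real.log b - Real.log (a + b) :=
    Real.log_div (by positivity) (by positivity)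
  have h3 : Real.log (a / (a + b) / p) = Real.log a - Real.log (a + b) - Real.log p := by
    rw [Real.log_div (by positivity) (ne_of_gt hp0), h1]
  have h4 : Real.log (b / (a + b) / (1 - p))
      = Real.log b - Real.log (a + b) - Real.log (1 - p) := by
    rw [Real.log_div (by positivity) (ne_of_gt (by linarith : (0:ℝ) < 1 - p)), h2]
  simp only [Hbin, klBin, hs1, Real.logb, h1, h2, h3, h4, hla, hlb]
  field_simp
  ring
end
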